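/- Let δ ∈ (0, 1), A, B ∈ ℝ, C ≥ 0, and let f : [−δ, 0] → ℝ be continuous with f(0) = 0 and differentiable on [−δ, 0), satisfying |f'(τ) − A·τ·log|τ| − B·τ| ≤ C·τ²·|log|τ|| for all τ ∈ [−δ, 0). Then for all τ ∈ [−δ, 0) one has |f(τ) − (A/2)·τ²·log|τ| + (A/4)·τ² − (B/2)·τ²| ≤ C·(|τ|³·|log|τ||/3 + |τ|³/9). -/

import Mathlib

open Set Filter Real Topology

private lemma stmt16_aux (δ A B C : ℝ) (hδ0 : 0 < δ) (hδ1 : δ < 1) (hC : 0 ≤ C)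
    (f f' : ℝ → ℝ)
    (hcont : ContinuousOn f (Set.Icc (-δ) 0))
    (hf0 : f 0 = 0)
    (hderiv : ∀ τ ∈ Set.Ico (-δ) (0 : ℝ),
      HasDerivWithinAt f (f' τ) (Set.Ico (-δ) (0 : ℝ)) τ)
    (hbound : ∀ τ ∈ Set.Ico (-δ) (0 : ℝ),
      |f' τ - A * τ * Real.log |τ| - B * τ| ≤ C * τ ^ 2 * abs (Real.log |τ|))
    (r : ℝ) (hr0 : 0 < r) (hrδ : r ≤ δ) :
    |f (-r) - ((A / 2) * r ^ 2 * Real.log r - (A / 4) * r ^ 2 + (B / 2) * r ^ 2)| ≤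
      C * (r ^ 3 / 9 - r ^ 3 * Real.log r / 3) := by
  set Q : ℝ → ℝ := fun t => (A / 2) * t ^ 2 * Real.log t - (A / 4) * t ^ 2 + (B / 2) * t ^ 2
    with hQ
  set F : ℝ → ℝ := fun t => f (-t) - Q t with hF
  set Bf : ℝ → ℝ := fun t => C * (t ^ 3 / 9 - t ^ 3 * Real.log t / 3) with hBf
  -- derivative of Q at positive points
  have hQd : ∀ t : ℝ, 0 < t → HasDerivAt Q (A * t * Real.log t + B * t) t := by
    intro t ht
    have h1 : HasDerivAt (fun t : ℝ => (A / 2) * t ^ 2 * Real.log t)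
        ((A / 2) * (2 * t) * Real.log t + (A / 2) * t ^ 2 * t⁻¹) t := by
      have := (((hasDerivAt_pow 2 t).const_mul (A / 2)).mul (Real.hasDerivAt_log ht.ne'))
      exact this.congr_deriv (by ring)
    have h2 : HasDerivAt (fun t : ℝ => (A / 4) * t ^ 2) ((A / 4) * (2 * t)) t := by
      simpa using (hasDerivAt_pow 2 t).const_mul (A / 4)
    have h3 : HasDerivAt (fun t : ℝ => (B / 2) * t ^ 2) ((B / 2) * (2 * t)) t := by
      simpa using (hasDerivAt_pow 2 t).const_mul (B / 2)
    have := (h1.sub h2).add h3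
    exact this.congr_deriv (by field_simp; ring)
  -- derivative of Bf at positive points
  have hBd : ∀ t : ℝ, 0 < t → HasDerivAt Bf (-(C * t ^ 2 * Real.log t)) t := by
    intro t ht
    have h1 : HasDerivAt (fun t : ℝ => t ^ 3 / 9) ((3 : ℕ) * t ^ 2 / 9) t := by
      simpa using (hasDerivAt_pow 3 t).div_const 9
    have h2 : HasDerivAt (fun t : ℝ => t ^ 3 * Real.log t / 3)
        (((3 : ℕ) * t ^ 2 * Real.log t + t ^ 3 * t⁻¹) / 3) t := by
      simpa using ((hasDerivAt_pow 3 t).mul (Real.hasDerivAt_log ht.ne')).div_const 3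
    have := ((h1.sub h2).const_mul C)
    exact this.congr_deriv (by field_simp; ring)
  -- main estimate for each ε ∈ (0, r)
  have key : ∀ ε ∈ Ioo (0 : ℝ) r, |F r - F ε| ≤ Bf r - Bf ε := by
    intro ε hε
    obtain ⟨hε0, hεr⟩ := hε
    have hFd : ∀ x ∈ Ico ε r, HasDerivWithinAt F (f' (-x) * (-1) -
        (A * x * Real.log x + B * x)) (Ici x) x := by
      intro x hx
      have hx0 : 0 < x := lt_of_lt_of_le hε0 hx.1
      have hxδ : x < δ := lt_of_lt_of_le hx.2 hrδ
      have hmem : -x ∈ Ico (-δ) (0 : ℝ) := ⟨by linarith, by linarith⟩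
      have hneg : HasDerivWithinAt (fun t : ℝ => -t) (-1) (Ioo 0 δ) x :=
        (hasDerivAt_neg x).hasDerivWithinAt
      have hmaps : MapsTo (fun t : ℝ => -t) (Ioo 0 δ) (Ico (-δ) (0 : ℝ)) := fun y hy =>
        ⟨show -δ ≤ -y by linarith [hy.2], show -y < (0:ℝ) by linarith [hy.1]⟩
      have hcomp : HasDerivWithinAt (fun t => f (-t)) (f' (-x) * (-1)) (Ioo 0 δ) x :=
        (hderiv (-x) hmem).comp x hneg hmaps
      have hcomp' : HasDerivWithinAt (fun t => f (-t)) (f' (-x) * (-1)) (Ici x) x :=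
        hcomp.mono_of_mem_nhdsWithin (mem_nhdsWithin_of_mem_nhds
          (isOpen_Ioo.mem_nhds ⟨hx0, hxδ⟩))
      exact hcomp'.sub ((hQd x hx0).hasDerivWithinAt)
    have hFc : ContinuousOn F (Icc ε r) := by
      intro x hx
      have hx0 : 0 < x := lt_of_lt_of_le hε0 hx.1
      have hmaps : MapsTo (fun t : ℝ => -t) (Icc ε r) (Icc (-δ) (0 : ℝ)) := fun y hy =>
        ⟨show -δ ≤ -y by linarith [hy.2], show -y ≤ (0:ℝ) by linarith [lt_of_lt_of_le hε0 hy.1]⟩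
      have h1 : ContinuousWithinAt (fun t => f (-t)) (Icc ε r) x :=
        (hcont (-x) (hmaps hx)).comp (continuous_neg.continuousWithinAt) hmaps
      exact h1.sub ((hQd x hx0).continuousAt.continuousWithinAt)
    have hBc : ContinuousOn (fun t => Bf t - Bf ε) (Icc ε r) := by
      intro x hx
      have hx0 : 0 < x := lt_of_lt_of_le hε0 hx.1
      exact ((hBd x hx0).continuousAt.continuousWithinAt).sub continuousWithinAt_const
    have hBd' : ∀ x ∈ Ico ε r, HasDerivWithinAt (fun t => Bf t - Bf ε)
        (-(C * x ^ 2 * Real.log x)) (Ici x) x := by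
      intro x hx
      have hx0 : 0 < x := lt_of_lt_of_le hε0 hx.1
      exact ((hBd x hx0).sub_const _).hasDerivWithinAt
    have hbd : ∀ x ∈ Ico ε r, ‖f' (-x) * (-1) - (A * x * Real.log x + B * x)‖ ≤
        -(C * x ^ 2 * Real.log x) := by
      intro x hx
      have hx0 : 0 < x := lt_of_lt_of_le hε0 hx.1
      have hxδ : x < δ := lt_of_lt_of_le hx.2 hrδ
      have hmem : -x ∈ Ico (-δ) (0 : ℝ) := ⟨by linarith, by linarith⟩
      have h := hbound (-x) hmem
      rw [abs_neg, abs_of_pos hx0] at h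
      have hlogle : Real.log x ≤ 0 :=
        Real.log_nonpos hx0.le (by linarith)
      have habs : |Real.log x| = -Real.log x := abs_of_nonpos hlogle
      rw [habs] at h
      have heq : |f' (-x) * (-1) - (A * x * Real.log x + B * x)| =
          |f' (-x) - A * (-x) * Real.log x - B * (-x)| := by
        rw [← abs_neg]; congr 1; ring
      rw [Real.norm_eq_abs, heq]
      calc |f' (-x) - A * (-x) * Real.log x - B * (-x)|
          ≤ C * (-x) ^ 2 * -Real.log x := h
        _ = -(C * x ^ 2 * Real.log x) := by ring
    have := image_norm_le_of_norm_deriv_right_le_deriv_boundary'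
      (f := fun t => F t - F ε) (f' := fun x => f' (-x) * (-1) - (A * x * Real.log x + B * x))
      (a := ε) (b := r)
      (hFc.sub continuousOn_const)
      (fun x hx => ((hFd x hx).sub_const _))
      (B := fun t => Bf t - Bf ε) (B' := fun x => -(C * x ^ 2 * Real.log x))
      (by simp) hBc hBd' hbd
    have hfin := this (x := r) ⟨hεr.le, le_refl r⟩
    simpa using hfin
  -- limits as ε → 0⁺
  have hF0 : Tendsto F (𝓝[>] (0 : ℝ)) (𝓝 0) := by
    have h1 : Tendsto (fun ε : ℝ => f (-ε)) (𝓝[>] (0 : ℝ)) (𝓝 0) := by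
      have hc : ContinuousWithinAt f (Icc (-δ) 0) 0 :=
        hcont 0 ⟨by linarith, le_refl 0⟩
      have hc' := hc.tendsto
      rw [hf0] at hc'
      apply hc'.comp
      apply tendsto_nhdsWithin_of_tendsto_nhds_of_eventually_within
      · have h2 := continuous_neg.tendsto (0 : ℝ)
        rw [neg_zero] at h2
        exact h2.mono_left nhdsWithin_le_nhds
      · filter_upwards [Ioo_mem_nhdsGT_of_mem ⟨le_refl (0:ℝ), hδ0⟩] with x hx
        exact ⟨by linarith [hx.2], by linarith [hx.1]⟩
    have hlog2 : Tendsto (fun ε : ℝ => ε ^ 2 * Real.log ε) (𝓝[>] (0 : ℝ)) (𝓝 0) := by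
      have := tendsto_log_mul_rpow_nhdsGT_zero (r := 2) (by norm_num)
      refine Tendsto.congr' ?_ this
      filter_upwards [self_mem_nhdsWithin] with x hx
      rw [Real.rpow_two]; ring
    have hQ0 : Tendsto Q (𝓝[>] (0 : ℝ)) (𝓝 0) := by
      have hsq : Tendsto (fun ε : ℝ => ε ^ 2) (𝓝[>] (0 : ℝ)) (𝓝 0) := by
        have := ((continuous_pow 2).tendsto (0 : ℝ)).mono_left
          (nhdsWithin_le_nhds (s := Ioi (0:ℝ)))
        simpa using this
      have : Tendsto Q (𝓝[>] (0 : ℝ)) (𝓝 ((A/2) * 0 - (A/4) * 0 + (B/2) * 0)) := by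
        apply Tendsto.add
        apply Tendsto.sub
        · exact ((hlog2.const_mul (A/2)).congr (fun x => by ring))
        · exact hsq.const_mul (A/4)
        · exact hsq.const_mul (B/2)
      simpa using this
    have := h1.sub hQ0
    simpa using this
  have hB0 : Tendsto Bf (𝓝[>] (0 : ℝ)) (𝓝 0) := by
    have hlog3 : Tendsto (fun ε : ℝ => ε ^ 3 * Real.log ε) (𝓝[>] (0 : ℝ)) (𝓝 0) := by
      have := tendsto_log_mul_rpow_nhdsGT_zero (r := 3) (by norm_num)
      refine Tendsto.congr' ?_ this
      filter_upwards [self_mem_nhdsWithin] with x hx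
      rw [show ((3:ℝ)) = ((3:ℕ):ℝ) by norm_num, Real.rpow_natCast]; ring
    have hcube : Tendsto (fun ε : ℝ => ε ^ 3 / 9) (𝓝[>] (0 : ℝ)) (𝓝 0) := by
      have := ((continuous_pow 3).tendsto (0 : ℝ)).mono_left
        (nhdsWithin_le_nhds (s := Ioi (0:ℝ)))
      simpa using this.div_const 9
    have : Tendsto Bf (𝓝[>] (0 : ℝ)) (𝓝 (C * (0 - 0/3))) := by
      apply Tendsto.const_mul
      exact hcube.sub (hlog3.div_const 3)
    simpa using this
  -- conclude
  have hle : |F r| ≤ Bf r := by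
    have ht1 : Tendsto (fun ε : ℝ => |F r - F ε|) (𝓝[>] (0 : ℝ)) (𝓝 |F r|) := by
      have : Tendsto (fun ε : ℝ => F r - F ε) (𝓝[>] (0 : ℝ)) (𝓝 (F r - 0)) :=
        tendsto_const_nhds.sub hF0
      simpa using this.abs
    have ht2 : Tendsto (fun ε : ℝ => Bf r - Bf ε) (𝓝[>] (0 : ℝ)) (𝓝 (Bf r)) := by
      have : Tendsto (fun ε : ℝ => Bf r - Bf ε) (𝓝[>] (0 : ℝ)) (𝓝 (Bf r - 0)) :=
        tendsto_const_nhds.sub hB0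
      simpa using this
    refine le_of_tendsto_of_tendsto ht1 ht2 ?_
    filter_upwards [Ioo_mem_nhdsGT_of_mem ⟨le_refl (0:ℝ), hr0⟩] with ε hε
    exact key ε hε
  calc |f (-r) - ((A / 2) * r ^ 2 * Real.log r - (A / 4) * r ^ 2 + (B / 2) * r ^ 2)|
      = |F r| := rfl
    _ ≤ Bf r := hle
    _ = C * (r ^ 3 / 9 - r ^ 3 * Real.log r / 3) := rfl

/-- **Integration of a `τ log|τ|` leading-order derivative from the boundary.**
Let `δ ∈ (0, 1)`, `A, B ∈ ℝ`, `C ≥ 0`, and let `f : [-δ, 0] → ℝ` be continuous with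
`f 0 = 0` and differentiable on `[-δ, 0)` with
`|f' τ - A τ log|τ| - B τ| ≤ C τ² |log|τ||` there. Then for all `τ ∈ [-δ, 0)`,
`|f τ - (A/2) τ² log|τ| + (A/4) τ² - (B/2) τ²| ≤ C (|τ|³ |log|τ|| / 3 + |τ|³ / 9)`. -/
theorem stmt_16 (δ A B C : ℝ) (hδ0 : 0 < δ) (hδ1 : δ < 1) (hC : 0 ≤ C)
    (f f' : ℝ → ℝ)
    (hcont : ContinuousOn f (Set.Icc (-δ) 0))
    (hf0 : f 0 = 0)
    (hderiv : ∀ τ ∈ Set.Ico (-δ) (0 : ℝ),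
      HasDerivWithinAt f (f' τ) (Set.Ico (-δ) (0 : ℝ)) τ)
    (hbound : ∀ τ ∈ Set.Ico (-δ) (0 : ℝ),
      |f' τ - A * τ * Real.log |τ| - B * τ| ≤ C * τ ^ 2 * abs (Real.log |τ|)) :
    ∀ τ ∈ Set.Ico (-δ) (0 : ℝ),
      |f τ - (A / 2) * τ ^ 2 * Real.log |τ| + (A / 4) * τ ^ 2 - (B / 2) * τ ^ 2| ≤
        C * (|τ| ^ 3 * abs (Real.log |τ|) / 3 + |τ| ^ 3 / 9) := by
  intro τ hτ
  obtain ⟨hτ1, hτ2⟩ := hτ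
  set r := -τ with hrdef
  have hr0 : 0 < r := by simp [hrdef]; linarith
  have hrδ : r ≤ δ := by simp [hrdef]; linarith
  have hr1 : r < 1 := lt_of_le_of_lt hrδ hδ1
  have habs : |τ| = r := abs_of_neg hτ2
  have hlogle : Real.log r ≤ 0 := Real.log_nonpos hr0.le hr1.le
  have hlogabs : |Real.log r| = -Real.log r := abs_of_nonpos hlogle
  have h := stmt16_aux δ A B C hδ0 hδ1 hC f f' hcont hf0 hderiv hbound r hr0 hrδ
  rw [habs, hlogabs]
  have hτr : τ = -r := by simp [hrdef]
  calc |f τ - A / 2 * τ ^ 2 * Real.log r + A / 4 * τ ^ 2 - B / 2 * τ ^ 2|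
      = |f (-r) - ((A / 2) * r ^ 2 * Real.log r - (A / 4) * r ^ 2 + (B / 2) * r ^ 2)| := by
        rw [hτr]; congr 1; ring
    _ ≤ C * (r ^ 3 / 9 - r ^ 3 * Real.log r / 3) := h
    _ = C * (r ^ 3 * -Real.log r / 3 + r ^ 3 / 9) := by ring
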